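/- If C is a linear [n,k;q] code with minimum distance at least 2, then for all z ∈ [0,1], A_C(z) ≤ g(z), where g(z) = (1+(q-1)z)^k + k(q-1)(z^2 - z). -/

import Mathlib

open scoped Classical

/-- Weight distribution function `A_C(z) = Σ_{c ∈ C} z^{wt(c)}`. -/
noncomputable def weightEnum {F : Type*} [Field F] [Fintype F] {n : ℕ}
    (C : Submodule F (Fin n → F)) (z : ℝ) : ℝ :=
  ∑ c : C, z ^ hammingNorm (c : Fin n → F)

lemma exists_info_set {F : Type*} [Field F] {n k : ℕ}
    (C : Submodule F (Fin n → F)) (hdim : Module.finrank F C = k) :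
    ∃ s : Finset (Fin n), s.card = k ∧
      ∀ c : C, (∀ i ∈ s, (c : Fin n → F) i = 0) → c = 0 := by
  set φ : Fin n → Module.Dual F C := fun i => (LinearMap.proj i).comp C.subtype with hφ
  have hsep : ∀ c : C, (∀ i, φ i c = 0) → c = 0 := by
    intro c h
    ext i
    exact h i
  have hspan : Submodule.span F (Set.range φ) = ⊤ := by
    have hco : (Submodule.span F (Set.range φ)).dualCoannihilator = ⊥ := by
      rw [Submodule.eq_bot_iff]
      intro c hc
      rw [Submodule.mem_dualCoannihilator] at hc
      exact hsep c fun i => hc (φ i) (Submodule.subset_span ⟨i, rfl⟩)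
    have h2 := Subspace.finrank_add_finrank_dualCoannihilator_eq
      (Submodule.span F (Set.range φ))
    rw [hco, finrank_bot, add_zero] at h2
    exact Submodule.eq_top_of_finrank_eq (by rw [h2, Subspace.dual_finrank_eq])
  obtain ⟨b, hbsub, hbspan, hbind⟩ := exists_linearIndependent F (Set.range φ)
  rw [hspan] at hbspan
  have hbfin : b.Finite := hbind.setFinite
  haveI : Fintype b := hbfin.fintype
  have hcard : Fintype.card b = k := by
    have h1 := finrank_span_set_eq_card hbind
    rw [hbspan] at h1
    rw [← Set.toFinset_card, ← h1, finrank_top, Subspace.dual_finrank_eq, hdim]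
  have hchoose : ∀ x : b, ∃ i : Fin n, φ i = (x : Module.Dual F C) := fun x => hbsub x.2
  choose g hg using hchoose
  have hginj : Function.Injective g := by
    intro x y hxy
    apply Subtype.ext
    rw [← hg x, ← hg y, hxy]
  refine ⟨Finset.univ.image g, ?_, ?_⟩
  · rw [Finset.card_image_of_injective _ hginj, Finset.card_univ, hcard]
  · intro c hc
    have hb0 : ∀ x ∈ b, (x : Module.Dual F C) c = 0 := by
      intro x hx
      have := hg ⟨x, hx⟩
      rw [show x = φ (g ⟨x, hx⟩) from this.symm]
      exact hc (g ⟨x, hx⟩) (Finset.mem_image_of_mem g (Finset.mem_univ _))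
    have hker : Submodule.span F b ≤ LinearMap.ker (Module.Dual.eval F C c) := by
      rw [Submodule.span_le]
      intro x hx
      simpa [LinearMap.mem_ker] using hb0 x hx
    rw [hbspan, top_le_iff] at hker
    apply hsep
    intro i
    have : φ i ∈ LinearMap.ker (Module.Dual.eval F C c) := hker ▸ Submodule.mem_top
    simpa [LinearMap.mem_ker] using this

lemma sum_pow_hammingNorm {F : Type*} [Field F] [Fintype F] (k : ℕ) (z : ℝ) :
    ∑ v : Fin k → F, z ^ hammingNorm v
      = (1 + ((Fintype.card F : ℝ) - 1) * z) ^ k := by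
  have h1 : ∀ v : Fin k → F, z ^ hammingNorm v
      = ∏ j : Fin k, (if v j ≠ 0 then z else 1) := by
    intro v
    rw [hammingNorm, ← Finset.prod_const, Finset.prod_filter]
  simp_rw [h1]
  have h2 : ∀ j : Fin k, (∑ a : F, if a ≠ 0 then z else 1)
      = 1 + ((Fintype.card F : ℝ) - 1) * z := by
    intro j
    have h3 : ∀ a : F, (if a ≠ 0 then z else 1) = z + (if a = 0 then 1 - z else 0) := by
      intro a; by_cases h : a = 0 <;> simp [h]
    simp_rw [h3, Finset.sum_add_distrib, Finset.sum_const, Finset.sum_ite_eq'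
      Finset.univ (0 : F) (fun _ => 1 - z), Finset.mem_univ, if_true, Finset.card_univ]
    push_cast
    ring
  have h4 := Finset.prod_univ_sum (fun _ : Fin k => (Finset.univ : Finset F))
    (fun _ a => if a ≠ 0 then z else 1)
  rw [Fintype.piFinset_univ] at h4
  rw [← h4]
  rw [Finset.prod_congr rfl (fun j _ => h2 j), Finset.prod_const, Finset.card_univ,
    Fintype.card_fin]

lemma hammingNorm_pi_single {F : Type*} [Field F] {k : ℕ} (i : Fin k) {a : F} (ha : a ≠ 0) :
    hammingNorm (Pi.single i a : Fin k → F) = 1 := by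
  rw [hammingNorm, Finset.card_eq_one]
  refine ⟨i, ?_⟩
  ext j
  simp only [Finset.mem_filter, Finset.mem_univ, true_and, Finset.mem_singleton]
  constructor
  · intro h
    by_contra hne
    exact h (Pi.single_eq_of_ne hne _)
  · rintro rfl
    rw [Pi.single_eq_same]
    exact ha

lemma count_weight_one {F : Type*} [Field F] [Fintype F] (k : ℕ) :
    k * (Fintype.card F - 1)
      ≤ (Finset.univ.filter (fun v : Fin k → F => hammingNorm v = 1)).card := by
  have key := Finset.card_le_card_of_injOn
    (f := fun p : Fin k × {a : F // a ≠ 0} => (Pi.single p.1 (p.2 : F) : Fin k → F))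
    (s := Finset.univ)
    (t := Finset.univ.filter (fun v : Fin k → F => hammingNorm v = 1))
    ?_ ?_
  · calc k * (Fintype.card F - 1)
        = (Finset.univ : Finset (Fin k × {a : F // a ≠ 0})).card := by
          rw [Finset.card_univ, Fintype.card_prod, Fintype.card_fin,
            Fintype.card_subtype_compl, Fintype.card_subtype_eq]
      _ ≤ _ := key
  · intro p _
    simp only [Finset.mem_coe, Finset.mem_filter, Finset.mem_univ, true_and]
    exact hammingNorm_pi_single p.1 p.2.2
  · intro p _ q _ hpq
    simp only [] at hpq
    have h1 := congrFun hpq p.1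
    rw [Pi.single_eq_same] at h1
    have hij : p.1 = q.1 := by
      by_contra hne
      rw [Pi.single_eq_of_ne hne] at h1
      exact p.2.2 h1
    have h2 := congrFun hpq p.1
    rw [Pi.single_eq_same, hij, Pi.single_eq_same] at h2
    exact Prod.ext hij (Subtype.ext h2)

/-- If `C` is an `[n,k;q]` code with minimum distance at least 2, then for all
`z ∈ [0,1]`, `A_C(z) ≤ (1+(q-1)z)^k + k(q-1)(z² - z)`. -/
theorem weightEnum_le_old_bound {F : Type*} [Field F] [Fintype F] {n k q : ℕ}
    (hq : Fintype.card F = q) (hk : 1 ≤ k) (hkn : k ≤ n)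
    (C : Submodule F (Fin n → F)) (hdim : Module.finrank F C = k)
    (hmin : ∀ c ∈ C, c ≠ 0 → 2 ≤ hammingNorm c) :
    ∀ z : ℝ, 0 ≤ z → z ≤ 1 →
      weightEnum C z ≤
        (1 + ((q : ℝ) - 1) * z) ^ k + (k : ℝ) * ((q : ℝ) - 1) * (z ^ 2 - z) := by
  intro z hz0 hz1
  have hq1 : 1 ≤ q := hq ▸ Fintype.card_pos
  obtain ⟨s, hscard, hsep⟩ := exists_info_set C hdim
  let e : Fin k ≃ {i // i ∈ s} := (Finset.equivFinOfCardEq hscard).symm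
  set p : C → (Fin k → F) := fun c j => (c : Fin n → F) (e j : Fin n) with hp
  have hpinj : Function.Injective p := by
    intro c c' h
    have h0 : c - c' = 0 := by
      apply hsep
      intro i hi
      have hj := congrFun h (e.symm ⟨i, hi⟩)
      simp only [hp, Equiv.apply_symm_apply] at hj
      show ((c - c' : C) : Fin n → F) i = 0
      rw [Submodule.coe_sub, Pi.sub_apply, hj, sub_self]
    exact sub_eq_zero.mp h0
  set f : (Fin k → F) → ℝ :=
    fun v => if hammingNorm v = 1 then z ^ 2 else z ^ hammingNorm v with hf
  have hf0 : ∀ v, 0 ≤ f v := by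
    intro v; rw [hf]; dsimp only; split <;> positivity
  have hwtle : ∀ c : C, hammingNorm (p c) ≤ hammingNorm (c : Fin n → F) := by
    intro c
    rw [hammingNorm, hammingNorm]
    apply Finset.card_le_card_of_injOn (fun j => (e j : Fin n))
    · intro j hj
      simp only [Finset.mem_coe, Finset.mem_filter, Finset.mem_univ, true_and] at hj ⊢
      exact hj
    · intro a _ b _ hab
      exact e.injective (Subtype.ext hab)
  have step1 : weightEnum C z ≤ ∑ c : C, f (p c) := by
    rw [weightEnum]
    apply Finset.sum_le_sum
    intro c _
    by_cases h1 : hammingNorm (p c) = 1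
    · have hc0 : (c : Fin n → F) ≠ 0 := by
        intro hc
        have hpc : p c = 0 := by
          funext j; rw [hp]; simp [hc]
        rw [hpc, hammingNorm_zero] at h1
        exact one_ne_zero h1.symm
      have h2 := hmin (c : Fin n → F) c.2 hc0
      rw [hf]; dsimp only; rw [if_pos h1]
      exact pow_le_pow_of_le_one hz0 hz1 h2
    · rw [hf]; dsimp only; rw [if_neg h1]
      exact pow_le_pow_of_le_one hz0 hz1 (hwtle c)
  have step2 : ∑ c : C, f (p c) ≤ ∑ v : Fin k → F, f v := by
    have himg : ∑ v ∈ Finset.univ.image p, f v = ∑ c : C, f (p c) :=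
      Finset.sum_image (fun x _ y _ hxy => hpinj hxy)
    rw [← himg]
    exact Finset.sum_le_sum_of_subset_of_nonneg (Finset.subset_univ _)
      (fun v _ _ => hf0 v)
  set N : ℕ := (Finset.univ.filter (fun v : Fin k → F => hammingNorm v = 1)).card with hN
  have step3 : ∑ v : Fin k → F, f v
      = (1 + ((q : ℝ) - 1) * z) ^ k + (N : ℝ) * (z ^ 2 - z) := by
    have hsplit : ∀ v : Fin k → F,
        f v = z ^ hammingNorm v + (if hammingNorm v = 1 then z ^ 2 - z else 0) := by
      intro v
      rw [hf]; dsimp only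
      by_cases h : hammingNorm v = 1
      · rw [if_pos h, if_pos h, h, pow_one]; ring
      · rw [if_neg h, if_neg h, add_zero]
    simp_rw [hsplit, Finset.sum_add_distrib]
    rw [sum_pow_hammingNorm, hq, ← Finset.sum_filter, Finset.sum_const,
      nsmul_eq_mul, hN]
  have hzz : z ^ 2 - z ≤ 0 := by nlinarith
  have hNk : (k : ℝ) * ((q : ℝ) - 1) ≤ (N : ℝ) := by
    have := count_weight_one (F := F) k
    rw [hq] at this
    calc (k : ℝ) * ((q : ℝ) - 1) = ((k * (q - 1) : ℕ) : ℝ) := by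
          push_cast [hq1]; ring
      _ ≤ (N : ℝ) := by exact_mod_cast this
  have final : (N : ℝ) * (z ^ 2 - z) ≤ (k : ℝ) * ((q : ℝ) - 1) * (z ^ 2 - z) :=
    mul_le_mul_of_nonpos_right hNk hzz
  calc weightEnum C z ≤ ∑ c : C, f (p c) := step1
    _ ≤ ∑ v : Fin k → F, f v := step2
    _ = (1 + ((q : ℝ) - 1) * z) ^ k + (N : ℝ) * (z ^ 2 - z) := step3
    _ ≤ _ := by linarith
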